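/- Let α ∈ (0,1) and let λ be a nonzero complex number with arg(λ) ∈ (-πα, πα). Set a_k = -(e^{iπα} sin(πα)/(π λ^k)) · (sin((k+1)πα)/sin(πα) - e^{ikπα}) for k ≥ 1. Then for every v with 0 < v < |λ|^{1/α}, the function f_{α,1}(v) = -(λ sin(πα)/π) · v^{α-1} / (v^{2α} - 2λ v^α cos(πα) + λ²) admits the convergent series expansion f_{α,1}(v) = Σ_{k=1}^∞ a_k v^{kα - 1}. -/

import Mathlib

open Real Set Filter MeasureTheory

lemma sin_mul_exp (z : ℂ) :
    Complex.sin z * (2 * Complex.I) * Complex.exp (z * Complex.I) =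
      Complex.exp (z * Complex.I) ^ 2 - 1 := by
  rw [Complex.sin, show -z * Complex.I = -(z * Complex.I) by ring, Complex.exp_neg]
  have h0 : Complex.exp (z * Complex.I) ≠ 0 := Complex.exp_ne_zero _
  field_simp
  linear_combination (1 - Complex.exp (z * Complex.I) ^ 2) * Complex.I_sq

lemma cos_mul_exp (z : ℂ) :
    Complex.cos z * (2 * Complex.exp (z * Complex.I)) =
      Complex.exp (z * Complex.I) ^ 2 + 1 := by
  rw [Complex.cos, show -z * Complex.I = -(z * Complex.I) by ring, Complex.exp_neg]
  have h0 : Complex.exp (z * Complex.I) ≠ 0 := Complex.exp_ne_zero _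
  field_simp

/-- The coefficients `a_k = -(e^{iπα} sin(πα)/(π λ^k)) (sin((k+1)πα)/sin(πα) - e^{ikπα})`. -/
noncomputable def aCoeff (α : ℝ) (lam : ℂ) (k : ℕ) : ℂ :=
  -(Complex.exp (Complex.I * π * α) * (Real.sin (π * α) : ℝ) / ((π : ℂ) * lam ^ k)) *
    (((Real.sin ((k + 1) * π * α) : ℝ) : ℂ) / ((Real.sin (π * α) : ℝ) : ℂ) -
      Complex.exp (Complex.I * k * π * α))

theorem stmt_12 (α : ℝ) (hα : α ∈ Set.Ioo (0 : ℝ) 1)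
    (lam : ℂ) (hlam : lam ≠ 0) (harg : lam.arg ∈ Set.Ioo (-(π * α)) (π * α))
    (v : ℝ) (hv : 0 < v) (hv' : v < ‖lam‖ ^ (1 / α)) :
    HasSum (fun k : ℕ => aCoeff α lam (k + 1) * ((v ^ ((k + 1 : ℕ) * α - 1) : ℝ) : ℂ))
      (-(lam * (Real.sin (π * α) : ℝ) / (π : ℂ)) * ((v ^ (α - 1) : ℝ) : ℂ) /
        (((v ^ (2 * α) : ℝ) : ℂ) - 2 * lam * ((v ^ α : ℝ) : ℂ) * (Real.cos (π * α) : ℝ) +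
          lam ^ 2)) := by
  obtain ⟨hα0, hα1⟩ := hα
  have hπ : (0:ℝ) < π := Real.pi_pos
  have hπ0 : (π : ℂ) ≠ 0 := by exact_mod_cast hπ.ne'
  have hπα : 0 < π * α := by positivity
  have hπα' : π * α < π := by nlinarith
  have hσR : Real.sin (π * α) ≠ 0 := ne_of_gt (Real.sin_pos_of_pos_of_lt_pi hπα hπα')
  have hσ0 : ((Real.sin (π * α) : ℝ) : ℂ) ≠ 0 := by exact_mod_cast hσR
  have hσC : Complex.sin ((π : ℂ) * (α : ℂ)) ≠ 0 := by
    rw [← Complex.ofReal_mul, ← Complex.ofReal_sin]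
    exact hσ0
  set ω : ℂ := Complex.exp ((π : ℂ) * α * Complex.I) with hωdef
  have hω0 : ω ≠ 0 := Complex.exp_ne_zero _
  set s : ℝ := v ^ α with hs
  have hs0 : 0 < s := Real.rpow_pos_of_pos hv α
  have hsC : ((s : ℝ) : ℂ) ≠ 0 := by exact_mod_cast hs0.ne'
  have hvC : ((v : ℝ) : ℂ) ≠ 0 := by exact_mod_cast hv.ne'
  have habs : (0:ℝ) < ‖lam‖ := norm_pos_iff.mpr hlam
  have hslam : s < ‖lam‖ := by
    have h := Real.rpow_lt_rpow hv.le hv' hα0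
    rwa [← Real.rpow_mul (norm_nonneg lam), one_div,
      inv_mul_cancel₀ hα0.ne', Real.rpow_one] at h
  have hωabs : ‖ω‖ = 1 := by
    rw [hωdef, Complex.norm_exp]
    simp [Complex.mul_re, Complex.mul_im]
  -- multiplicative sine/cosine relations
  have hσm : ((Real.sin (π * α) : ℝ) : ℂ) * (2 * Complex.I) * ω = ω ^ 2 - 1 := by
    have h := sin_mul_exp ((π : ℂ) * (α : ℂ))
    rw [← hωdef] at h
    rw [Complex.ofReal_sin, Complex.ofReal_mul]
    exact h
  have hcm : ((Real.cos (π * α) : ℝ) : ℂ) * (2 * ω) = ω ^ 2 + 1 := by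
    have h := cos_mul_exp ((π : ℂ) * (α : ℂ))
    rw [← hωdef] at h
    rw [Complex.ofReal_cos, Complex.ofReal_mul]
    exact h
  set x : ℂ := ω * s / lam with hxdef
  set y : ℂ := (s : ℂ) / (ω * lam) with hydef
  have hxn : ‖x‖ < 1 := by
    have hx : ‖x‖ = s / ‖lam‖ := by
      rw [hxdef]
      simp [map_div₀, map_mul, hωabs,
        abs_of_pos hs0]
    rw [hx, div_lt_one habs]
    exact hslam
  have hyn : ‖y‖ < 1 := by
    have hy : ‖y‖ = s / ‖lam‖ := by
      rw [hydef]
      simp [map_div₀, map_mul, hωabs,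
        abs_of_pos hs0]
    rw [hy, div_lt_one habs]
    exact hslam
  have hx1 : 1 - x ≠ 0 := by
    intro h
    rw [sub_eq_zero] at h
    rw [← h] at hxn
    simp at hxn
  have hy1 : 1 - y ≠ 0 := by
    intro h
    rw [sub_eq_zero] at h
    rw [← h] at hyn
    simp at hyn
  have hu : lam - ω * (s : ℂ) ≠ 0 := by
    intro h
    rw [sub_eq_zero] at h
    apply hx1
    rw [hxdef, ← h, div_self hlam, sub_self]
  have hw : ω * lam - (s : ℂ) ≠ 0 := by
    intro h
    rw [sub_eq_zero] at h
    apply hy1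
    rw [hydef, ← h, div_self (mul_ne_zero hω0 hlam), sub_self]
  have Hx : HasSum (fun k : ℕ => x ^ (k + 1)) (x * (1 - x)⁻¹) := by
    simpa [pow_succ'] using (hasSum_geometric_of_norm_lt_one hxn).mul_left x
  have Hy : HasSum (fun k : ℕ => y ^ (k + 1)) (y * (1 - y)⁻¹) := by
    simpa [pow_succ'] using (hasSum_geometric_of_norm_lt_one hyn).mul_left y
  have H : HasSum
      (fun k : ℕ => -(1 / (2 * (π : ℂ) * Complex.I * v)) * (x ^ (k + 1) - y ^ (k + 1)))
      (-(1 / (2 * (π : ℂ) * Complex.I * v)) * (x * (1 - x)⁻¹ - y * (1 - y)⁻¹)) :=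
    (Hx.sub Hy).mul_left _
  have key : ∀ k : ℕ, aCoeff α lam (k + 1) * ((v ^ ((k + 1 : ℕ) * α - 1) : ℝ) : ℂ)
      = -(1 / (2 * (π : ℂ) * Complex.I * v)) * (x ^ (k + 1) - y ^ (k + 1)) := by
    intro k
    have hωk1 : (ω : ℂ) ^ (k + 1) ≠ 0 := pow_ne_zero _ hω0
    have hlk : lam ^ (k + 1) ≠ 0 := pow_ne_zero _ hlam
    have hrv : (v ^ (((k + 1 : ℕ) : ℝ) * α - 1) : ℝ) = s ^ (k + 1) / v := by
      rw [Real.rpow_sub hv, Real.rpow_one, mul_comm ((k + 1 : ℕ) : ℝ) α,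
        Real.rpow_mul hv.le, hs, Real.rpow_natCast]
    have hek : Complex.exp (Complex.I * ((k + 1 : ℕ) : ℂ) * π * α) = ω ^ (k + 1) := by
      rw [hωdef, ← Complex.exp_nat_mul]
      congr 1
      push_cast
      ring
    have he1 : Complex.exp (Complex.I * ↑π * ↑α) = ω := by
      rw [hωdef]; congr 1; ring
    have he : Complex.exp ((((k : ℂ) + 1 + 1)) * ↑π * ↑α * Complex.I) = ω ^ (k + 2) := by
      rw [hωdef, ← Complex.exp_nat_mul]
      congr 1
      push_cast
      ring
    have hcastS : ((Real.sin ((((k + 1 : ℕ) : ℝ) + 1) * π * α) : ℝ) : ℂ)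
        = Complex.sin (((k : ℂ) + 1 + 1) * ↑π * ↑α) := by
      rw [Complex.ofReal_sin]
      congr 1
      push_cast
      ring
    have hSm : ((Real.sin ((((k + 1 : ℕ) : ℝ) + 1) * π * α) : ℝ) : ℂ) * (2 * Complex.I) *
        ω ^ (k + 2) = (ω ^ (k + 2)) ^ 2 - 1 := by
      rw [hcastS]
      have h := sin_mul_exp ((((k : ℂ) + 1 + 1)) * ↑π * ↑α)
      rwa [he] at h
    have hsub : ((Real.sin ((((k + 1 : ℕ) : ℝ) + 1) * π * α) : ℝ) : ℂ) /
          ((Real.sin (π * α) : ℝ) : ℂ) - ω ^ (k + 1)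
        = (((Real.sin ((((k + 1 : ℕ) : ℝ) + 1) * π * α) : ℝ) : ℂ) -
            ((Real.sin (π * α) : ℝ) : ℂ) * ω ^ (k + 1)) / ((Real.sin (π * α) : ℝ) : ℂ) := by
      rw [sub_div, mul_div_cancel_left₀ _ hσ0]
    rw [aCoeff, hrv, hek, he1, hsub]
    push_cast at hSm ⊢
    trans (-(ω * Complex.sin ((π : ℂ) * (α : ℂ)) *
        (Complex.sin (((k : ℂ) + 1 + 1) * ↑π * ↑α) -
          Complex.sin ((π : ℂ) * (α : ℂ)) * ω ^ (k + 1)) * ((s : ℝ) : ℂ) ^ (k + 1)) /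
      ((π : ℂ) * lam ^ (k + 1) * Complex.sin ((π : ℂ) * (α : ℂ)) * (v : ℂ)))
    · ring
    trans (-(ω ^ (k + 1) * ((s : ℝ) : ℂ) ^ (k + 1) * (ω ^ (k + 1) * lam ^ (k + 1)) -
        lam ^ (k + 1) * ((s : ℝ) : ℂ) ^ (k + 1)) /
      (2 * (π : ℂ) * Complex.I * (v : ℂ) * (lam ^ (k + 1) * (ω ^ (k + 1) * lam ^ (k + 1)))))
    · rw [div_eq_div_iff
        (mul_ne_zero (mul_ne_zero (mul_ne_zero hπ0 hlk) hσC) hvC)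
        (mul_ne_zero (mul_ne_zero (mul_ne_zero (mul_ne_zero two_ne_zero hπ0)
          Complex.I_ne_zero) hvC) (mul_ne_zero hlk (mul_ne_zero hωk1 hlk)))]
      have hσm' := hσm
      push_cast at hσm'
      linear_combination
        (-((π : ℂ) * (v : ℂ) * lam ^ (k + 1) * lam ^ (k + 1) * ((s : ℝ) : ℂ) ^ (k + 1) *
          Complex.sin ((π : ℂ) * (α : ℂ)))) * hSm
        + ((π : ℂ) * (v : ℂ) * lam ^ (k + 1) * lam ^ (k + 1) * ((s : ℝ) : ℂ) ^ (k + 1) *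
            Complex.sin ((π : ℂ) * (α : ℂ)) * ω ^ (k + 1) * ω ^ (k + 1)) * hσm'
    · rw [hxdef, hydef]
      simp only [div_pow, mul_pow]
      rw [div_sub_div _ _ hlk (mul_ne_zero hωk1 hlk)]
      ring
  have hval : (-(lam * (Real.sin (π * α) : ℝ) / (π : ℂ)) * ((v ^ (α - 1) : ℝ) : ℂ) /
        (((v ^ (2 * α) : ℝ) : ℂ) - 2 * lam * ((v ^ α : ℝ) : ℂ) * (Real.cos (π * α) : ℝ) +
          lam ^ 2))
      = -(1 / (2 * (π : ℂ) * Complex.I * v)) * (x * (1 - x)⁻¹ - y * (1 - y)⁻¹) := by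
    have h1 : (v ^ (α - 1) : ℝ) = s / v := by
      rw [Real.rpow_sub hv, Real.rpow_one, hs]
    have h2 : (v ^ (2 * α) : ℝ) = s ^ 2 := by
      rw [mul_comm, Real.rpow_mul hv.le, hs]
      norm_num
    have hx1' : (1 : ℂ) - ω * (s : ℂ) / lam ≠ 0 := by rw [← hxdef]; exact hx1
    have hy1' : (1 : ℂ) - (s : ℂ) / (ω * lam) ≠ 0 := by rw [← hydef]; exact hy1
    have hxq : x * (1 - x)⁻¹ = ω * (s : ℂ) / (lam - ω * (s : ℂ)) := by
      rw [hxdef, ← div_eq_mul_inv, div_eq_div_iff hx1' hu]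
      linear_combination (ω * ((s : ℝ) : ℂ)) * (mul_inv_cancel₀ hlam)
    have hyq : y * (1 - y)⁻¹ = (s : ℂ) / (ω * lam - (s : ℂ)) := by
      rw [hydef, ← div_eq_mul_inv, div_eq_div_iff hy1' hw]
      linear_combination ((s : ℝ) : ℂ) * (mul_inv_cancel₀ (mul_ne_zero hω0 hlam))
    have hDfact : (((s : ℝ) : ℂ)) ^ 2 - 2 * lam * ((s : ℝ) : ℂ) * ((Real.cos (π * α) : ℝ) : ℂ) +
        lam ^ 2 = (lam - ω * (s : ℂ)) * (ω * lam - (s : ℂ)) / ω := by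
      rw [eq_div_iff hω0]
      linear_combination (-(lam * ((s : ℝ) : ℂ))) * hcm
    rw [h1, h2, Complex.ofReal_div, Complex.ofReal_pow, hDfact, div_div_eq_mul_div]
    trans ((-(lam * ((Real.sin (π * α) : ℝ) : ℂ) * (s : ℂ) * ω) / ((π : ℂ) * (v : ℂ))) /
      ((lam - ω * (s : ℂ)) * (ω * lam - (s : ℂ))))
    · congr 1
      ring
    trans ((-(ω * (s : ℂ) * (ω * lam - (s : ℂ)) - (lam - ω * (s : ℂ)) * (s : ℂ)) /
        (2 * (π : ℂ) * Complex.I * (v : ℂ))) /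
      ((lam - ω * (s : ℂ)) * (ω * lam - (s : ℂ))))
    · congr 1
      rw [div_eq_div_iff (mul_ne_zero hπ0 hvC)
        (mul_ne_zero (mul_ne_zero (mul_ne_zero two_ne_zero hπ0) Complex.I_ne_zero) hvC)]
      linear_combination (-((π : ℂ) * (v : ℂ) * lam * ((s : ℝ) : ℂ))) * hσm
    · rw [hxq, hyq, div_sub_div _ _ hu hw, ← mul_div_assoc]
      congr 1
      ring
  convert H using 1
  exact funext key
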